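/- arXiv:1401.0493 — 2 statements merged into one kernel-verified Lean document; each statement's English description precedes it below -/
import Mathlib

section
/- Let p be a prime with p ≡ 1 (mod 4) and let q ≡ 3 (mod 8) be an integer with p ∤ q. Suppose p = c² + d² and 4p = x² + q·y² with c, d, x, y integers. Then gcd(q·y, x + 2d) = 1 and gcd(q·y², 4c² + (x+2d)²) = 1, provided gcd(c, x+2d) = 1 and y is odd. -/
private lemma gcd_eq_one_of_no_common_prime (a b : ℤ) (ha : a ≠ 0)
    (H : ∀ r : ℕ, r.Prime → (r : ℤ) ∣ a → (r : ℤ) ∣ b → False) :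
    Int.gcd a b = 1 := by
  by_contra hg
  obtain ⟨r, hr, hrd⟩ := Nat.exists_prime_and_dvd hg
  have hrd' : (r : ℤ) ∣ (Int.gcd a b : ℤ) := Int.natCast_dvd_natCast.mpr hrd
  exact H r hr (hrd'.trans (Int.gcd_dvd_left a b)) (hrd'.trans (Int.gcd_dvd_right a b))

private lemma ne_two_of_dvd_odd {n : ℤ} {r : ℕ} (hn : Odd n) (hd : (r : ℤ) ∣ n) :
    r ≠ 2 := by
  rintro rfl
  rw [← Int.not_even_iff_odd] at hn
  exact hn ((even_iff_two_dvd).mpr (by exact_mod_cast hd))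

theorem stmt_1 (p : ℕ) (hp : p.Prime) (hp4 : p % 4 = 1)
    (q c d x y : ℤ) (hq8 : q % 8 = 3) (hpq : ¬ (p : ℤ) ∣ q)
    (hcd : (p : ℤ) = c ^ 2 + d ^ 2) (h : 4 * (p : ℤ) = x ^ 2 + q * y ^ 2)
    (hy : Odd y) (hgcd : Int.gcd c (x + 2 * d) = 1) :
    Int.gcd (q * y) (x + 2 * d) = 1 ∧
      Int.gcd (q * y ^ 2) (4 * c ^ 2 + (x + 2 * d) ^ 2) = 1 := by
  have hqodd : Odd q := by rw [Int.odd_iff]; omega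
  have hqy : Odd (q * y) := hqodd.mul hy
  have hqy2 : Odd (q * y ^ 2) := hqodd.mul hy.pow
  have key : q * y ^ 2 = 4 * c ^ 2 + (x + 2 * d) * (2 * d - x) := by
    linear_combination 4 * hcd - h
  have prime_dvd_four : ∀ r : ℕ, r.Prime → (r : ℤ) ∣ 4 → r = 2 := by
    intro r hr h4
    have h4n : r ∣ 4 := by exact_mod_cast h4
    have : r ∣ 2 := hr.dvd_of_dvd_pow (show r ∣ 2 ^ 2 by norm_num [h4n])
    exact (Nat.prime_dvd_prime_iff_eq hr Nat.prime_two).mp this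
  have h1 : Int.gcd (q * y) (x + 2 * d) = 1 := by
    apply gcd_eq_one_of_no_common_prime
    · rintro h0; rw [h0] at hqy; simp [Int.odd_iff] at hqy
    · intro r hr hra hrb
      have hrp : Prime (r : ℤ) := Nat.prime_iff_prime_int.mp hr
      have hr2 : r ≠ 2 := ne_two_of_dvd_odd hqy hra
      have hqy2d : (r : ℤ) ∣ q * y ^ 2 := by
        rw [sq, ← mul_assoc]; exact hra.mul_right y
      have h4c : (r : ℤ) ∣ 4 * c ^ 2 := by
        have := dvd_sub hqy2d (hrb.mul_right (2 * d - x))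
        rwa [show q * y ^ 2 - (x + 2 * d) * (2 * d - x) = 4 * c ^ 2 by
          linear_combination key] at this
      rcases hrp.dvd_mul.mp h4c with h4 | hc2
      · exact hr2 (prime_dvd_four r hr h4)
      · have hc : (r : ℤ) ∣ c := hrp.dvd_of_dvd_pow hc2
        have hd1 := Int.dvd_coe_gcd hc hrb
        rw [hgcd] at hd1
        have := Int.le_of_dvd one_pos hd1
        have := hr.two_le
        omega
  refine ⟨h1, ?_⟩
  apply gcd_eq_one_of_no_common_prime
  · rintro h0; rw [h0] at hqy2; simp [Int.odd_iff] at hqy2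
  · intro r hr hra hrb
    have hrp : Prime (r : ℤ) := Nat.prime_iff_prime_int.mp hr
    have hr2 : r ≠ 2 := ne_two_of_dvd_odd hqy2 hra
    have hrqy : (r : ℤ) ∣ q * y := by
      rcases hrp.dvd_mul.mp hra with hq' | hy2
      · exact hq'.mul_right y
      · exact (hrp.dvd_of_dvd_pow hy2).mul_left q
    have hrxd : ¬ (r : ℤ) ∣ (x + 2 * d) := by
      intro hd
      have hd1 := Int.dvd_coe_gcd hrqy hd
      rw [h1] at hd1
      have := Int.le_of_dvd one_pos hd1
      have := hr.two_le
      omega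
    have hrx : (r : ℤ) ∣ x := by
      have hdd : (r : ℤ) ∣ (x + 2 * d) * (2 * x) := by
        have := dvd_sub hrb hra
        rwa [show 4 * c ^ 2 + (x + 2 * d) ^ 2 - q * y ^ 2 = (x + 2 * d) * (2 * x) by
          linear_combination -key] at this
      rcases hrp.dvd_mul.mp hdd with h' | h'
      · exact absurd h' hrxd
      · rcases hrp.dvd_mul.mp h' with h'' | h''
        · exact absurd (prime_dvd_four r hr (h''.mul_right 2)) hr2
        · exact h''
    have hr4p : (r : ℤ) ∣ 4 * (p : ℤ) := by
      have hx2 : (r : ℤ) ∣ x ^ 2 := by rw [sq]; exact hrx.mul_right x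
      rw [h]; exact dvd_add hx2 hra
    have hrep : r = p := by
      rcases hrp.dvd_mul.mp hr4p with h4 | hP
      · exact absurd (prime_dvd_four r hr h4) hr2
      · exact (Nat.prime_dvd_prime_iff_eq hr hp).mp (Int.ofNat_dvd.mp hP)
    subst hrep
    have hpy : (r : ℤ) ∣ y := by
      rcases hrp.dvd_mul.mp hra with hq' | hy2
      · exact absurd hq' hpq
      · exact hrp.dvd_of_dvd_pow hy2
    obtain ⟨a, hax⟩ := hrx
    obtain ⟨b, hby⟩ := hpy
    have hr0 : (r : ℤ) ≠ 0 := Int.natCast_ne_zero.mpr hr.ne_zero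
    have hcancel : (r : ℤ) * 4 = (r : ℤ) * ((r : ℤ) * (a ^ 2 + q * b ^ 2)) := by
      linear_combination h + (x + (r : ℤ) * a) * hax + q * (y + (r : ℤ) * b) * hby
    have h4eq : (4 : ℤ) = (r : ℤ) * (a ^ 2 + q * b ^ 2) := mul_left_cancel₀ hr0 hcancel
    have hdvd4 : r ∣ 4 := by
      have : (r : ℤ) ∣ 4 := Dvd.intro _ h4eq.symm
      exact_mod_cast this
    have := Nat.le_of_dvd (by norm_num) hdvd4
    have := hr.two_le
    omega
end

section
/- Let p ≡ 1 (mod 4) be prime with p = c² + d² = x² + 2q·y² for an odd integer q with p ∤ q, where c is odd, d even. Write 2^m ∥ (x+c) (i.e., 2^m exactly divides x+c), d = 2^r·d₀ with d₀ odd, and y = 2^t·y₀ with y₀ odd, and suppose m > r ≥ 2 and p ≡ 1 (mod 8). Then from 2q·y² = d² − (x+c)² + 2c(x+c) and 2^{m+1} ∥ (2q·y² − d²) it follows that m + 1 = min(2t+1, 2r) ≤ 2r, and in particular t > 1. -/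
lemma aux_not_dvd (k : ℕ) (n E : ℤ) (hn : Odd n) (hE : E = 2 ^ k * n) :
    ¬ (2 : ℤ) ^ (k + 1) ∣ E := by
  intro h
  rw [hE, pow_succ] at h
  have h2 : (2 : ℤ) ∣ n :=
    (mul_dvd_mul_iff_left (a := (2:ℤ)^k) (by positivity)).mp h
  obtain ⟨b, hb⟩ := h2
  exact (Int.not_odd_iff_even.mpr ⟨b, by linarith⟩) hn

lemma aux_lt {E : ℤ} {a b : ℕ} (h1 : (2:ℤ)^a ∣ E) (h2 : ¬ (2:ℤ)^b ∣ E) : a < b := by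
  by_contra h
  exact h2 ((pow_dvd_pow 2 (by omega)).trans h1)

theorem stmt_18 (p : ℕ) (hp : p.Prime) (hp8 : p % 8 = 1)
    (q c d d₀ x y y₀ : ℤ) (r t m : ℕ) (hq : Odd q) (hpq : ¬ (p : ℤ) ∣ q)
    (hcd : (p : ℤ) = c ^ 2 + d ^ 2) (hxy : (p : ℤ) = x ^ 2 + 2 * q * y ^ 2)
    (hc : Odd c) (hd : d = 2 ^ r * d₀) (hd₀ : Odd d₀) (hr : 2 ≤ r)
    (hy : y = 2 ^ t * y₀) (hy₀ : Odd y₀) (ht : 1 ≤ t)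
    (hm : (2 : ℤ) ^ m ∣ x + c) (hm' : ¬ (2 : ℤ) ^ (m + 1) ∣ x + c)
    (hmr : r < m) :
    m + 1 = min (2 * t + 1) (2 * r) ∧ m + 1 ≤ 2 * r ∧ 1 < t := by
  obtain ⟨a, ha⟩ := hm
  have hao : Odd a := by
    rcases Int.even_or_odd a with he | ho
    · exfalso
      obtain ⟨b, hb⟩ := he
      exact hm' ⟨b, by rw [ha, hb, pow_succ]; ring⟩
    · exact ho
  obtain ⟨k, rfl⟩ : ∃ k, m = k + 3 := ⟨m - 3, by omega⟩
  -- key identity and exact valuation m+1 of E = 2qy² - d²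
  have hE2 : 2 * q * y ^ 2 - d ^ 2 = 2 ^ (k + 4) * (a * c - 2 ^ (k + 2) * a ^ 2) := by
    have h1 : 2 * q * y ^ 2 - d ^ 2 = (x + c) * (2 * c - (x + c)) := by
      linear_combination hcd - hxy
    rw [h1, ha]; ring
  have hdvd1 : (2:ℤ) ^ (k + 4) ∣ 2 * q * y ^ 2 - d ^ 2 := ⟨_, hE2⟩
  have hodd1 : Odd (a * c - 2 ^ (k + 2) * a ^ 2) :=
    (hao.mul hc).sub_even ⟨2 ^ (k + 1) * a ^ 2, by ring⟩
  have hnd1 : ¬ (2:ℤ) ^ (k + 5) ∣ 2 * q * y ^ 2 - d ^ 2 := aux_not_dvd _ _ _ hodd1 hE2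
  rcases lt_trichotomy (2 * t + 1) (2 * r) with hlt | heq | hgt
  · -- 2t+1 < 2r : valuation is 2t+1
    obtain ⟨s, rfl⟩ : ∃ s, r = t + 1 + s := ⟨r - t - 1, by omega⟩
    have hE3 : 2 * q * y ^ 2 - d ^ 2
        = 2 ^ (2 * t + 1) * (q * y₀ ^ 2 - 2 ^ (2 * s + 1) * d₀ ^ 2) := by
      rw [hy, hd]; ring
    have hodd3 : Odd (q * y₀ ^ 2 - 2 ^ (2 * s + 1) * d₀ ^ 2) :=
      (hq.mul (hy₀.pow)).sub_even ⟨2 ^ (2 * s) * d₀ ^ 2, by ring⟩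
    have hdvd3 : (2:ℤ) ^ (2 * t + 1) ∣ 2 * q * y ^ 2 - d ^ 2 := ⟨_, hE3⟩
    have hnd3 : ¬ (2:ℤ) ^ (2 * t + 1 + 1) ∣ 2 * q * y ^ 2 - d ^ 2 :=
      aux_not_dvd _ _ _ hodd3 hE3
    have e1 := aux_lt hdvd1 hnd3
    have e2 := aux_lt hdvd3 hnd1
    constructor
    · omega
    · omega
  · omega
  · -- 2r < 2t+1 : valuation is 2r
    obtain ⟨s, rfl⟩ : ∃ s, t = r + s := ⟨t - r, by omega⟩
    have hE3 : 2 * q * y ^ 2 - d ^ 2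
        = 2 ^ (2 * r) * (2 ^ (2 * s + 1) * q * y₀ ^ 2 - d₀ ^ 2) := by
      rw [hy, hd]; ring
    have hodd3 : Odd (2 ^ (2 * s + 1) * q * y₀ ^ 2 - d₀ ^ 2) :=
      (Even.sub_odd ⟨2 ^ (2 * s) * q * y₀ ^ 2, by ring⟩ (hd₀.pow))
    have hdvd3 : (2:ℤ) ^ (2 * r) ∣ 2 * q * y ^ 2 - d ^ 2 := ⟨_, hE3⟩
    have hnd3 : ¬ (2:ℤ) ^ (2 * r + 1) ∣ 2 * q * y ^ 2 - d ^ 2 :=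
      aux_not_dvd _ _ _ hodd3 hE3
    have e1 := aux_lt hdvd1 hnd3
    have e2 := aux_lt hdvd3 hnd1
    constructor
    · omega
    · omega
end
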